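/- Let μ be a Borel probability measure on E with compact support A satisfying the small-ball assumption with constants c, α, r₀, and let m be its tilted barycenter. Fix x* ∈ E. Then for every ε > 0 there exists δ > 0 such that for all x ∈ E and all t > 0 with ‖x − x*‖ + t ≤ δ, dist(m(x,t), convexHull ℝ (Π_A(x*))) ≤ ε. -/

import Mathlib

open MeasureTheory Metric Filter Topology

/-- The heat kernel `G_t(z) = (4πt)^{-d/2} exp(-‖z‖²/(4t))` on `EuclideanSpace ℝ (Fin d)`. -/
noncomputable def heatKernel (d : ℕ) (t : ℝ) (z : EuclideanSpace ℝ (Fin d)) : ℝ :=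
  (4 * Real.pi * t) ^ (-(d : ℝ) / 2) * Real.exp (-‖z‖ ^ 2 / (4 * t))

/-- The heat evolution `u(x,t) = ∫ G_t(x - y) dμ(y)` of a measure `μ`. -/
noncomputable def heatEvolution {d : ℕ} (μ : Measure (EuclideanSpace ℝ (Fin d)))
    (x : EuclideanSpace ℝ (Fin d)) (t : ℝ) : ℝ :=
  ∫ y, heatKernel d t (x - y) ∂μ

/-- The (topological) support of a Borel measure: points all of whose neighborhoods
have positive measure. -/
def msupport {E : Type*} [TopologicalSpace E] [MeasurableSpace E] (μ : Measure E) : Set E :=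
  {x | ∀ U ∈ nhds x, 0 < μ U}

/-- Small-ball assumption: `μ(B(x,r)) ≥ c·r^α` for every `x` in the support of `μ`
and every `r ∈ (0, r₀]`. -/
def SmallBall {d : ℕ} (μ : Measure (EuclideanSpace ℝ (Fin d))) (c α r₀ : ℝ) : Prop :=
  ∀ x ∈ msupport μ, ∀ r : ℝ, 0 < r → r ≤ r₀ →
    ENNReal.ofReal (c * r ^ α) ≤ μ (Metric.closedBall x r)

/-- The tilted barycenter `m(x,t) = (∫ y G_t(x-y) dμ(y)) / u(x,t)`. -/
noncomputable def tiltedBarycenter {d : ℕ} (μ : Measure (EuclideanSpace ℝ (Fin d)))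
    (x : EuclideanSpace ℝ (Fin d)) (t : ℝ) : EuclideanSpace ℝ (Fin d) :=
  (heatEvolution μ x t)⁻¹ • ∫ y, heatKernel d t (x - y) • y ∂μ

/-- The set `Π_A(x)` of nearest points of `x` in `A`. -/
def nearestPts {d : ℕ} (A : Set (EuclideanSpace ℝ (Fin d)))
    (x : EuclideanSpace ℝ (Fin d)) : Set (EuclideanSpace ℝ (Fin d)) :=
  {a ∈ A | ‖x - a‖ = Metric.infDist x A}

set_option maxHeartbeats 1000000

lemma msupport_compl_null {E : Type*} [TopologicalSpace E] [MeasurableSpace E]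
    [SecondCountableTopology E] (μ : Measure E) :
    μ (msupport μ)ᶜ = 0 := by
  set S : Set (Set E) := {V | IsOpen V ∧ μ V = 0} with hS
  obtain ⟨T, hTc, hTS, hT⟩ := TopologicalSpace.isOpen_sUnion_countable S (fun s hs => hs.1)
  have h1 : (msupport μ)ᶜ ⊆ ⋃₀ S := by
    intro x hx
    simp only [Set.mem_compl_iff, msupport, Set.mem_setOf_eq, not_forall] at hx
    obtain ⟨U, hU, hUm⟩ := hx
    obtain ⟨V, hVU, hVo, hxV⟩ := mem_nhds_iff.1 hU
    exact ⟨V, ⟨hVo, measure_mono_null hVU (le_antisymm (not_lt.1 hUm) zero_le)⟩, hxV⟩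
  have h2 : μ (⋃₀ S) = 0 := by
    rw [← hT]
    exact (measure_sUnion_null_iff hTc).2 fun s hs => (hTS hs).2
  exact measure_mono_null h1 h2

lemma convexOn_infDist' {E : Type*} [NormedAddCommGroup E] [NormedSpace ℝ E]
    {C : Set E} (hne : C.Nonempty) (hC : Convex ℝ C) :
    ConvexOn ℝ Set.univ (fun x => infDist x C) := by
  refine ⟨convex_univ, fun x _ y _ a b ha hb hab => ?_⟩
  refine le_of_forall_pos_le_add fun ε hε => ?_
  obtain ⟨p, hp, hxp⟩ := (infDist_lt_iff hne).1
    (lt_add_of_pos_right (infDist x C) hε)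
  obtain ⟨q, hq, hyq⟩ := (infDist_lt_iff hne).1
    (lt_add_of_pos_right (infDist y C) hε)
  have hmem : a • p + b • q ∈ C := hC hp hq ha hb hab
  have h1 : infDist (a • x + b • y) C ≤ dist (a • x + b • y) (a • p + b • q) :=
    infDist_le_dist_of_mem hmem
  have h2 : dist (a • x + b • y) (a • p + b • q) ≤ a * dist x p + b * dist y q := by
    rw [dist_eq_norm, dist_eq_norm, dist_eq_norm]
    have : a • x + b • y - (a • p + b • q) = a • (x - p) + b • (y - q) := by
      module
    rw [this]
    calc ‖a • (x - p) + b • (y - q)‖ ≤ ‖a • (x - p)‖ + ‖b • (y - q)‖ := norm_add_le _ _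
    _ = a * ‖x - p‖ + b * ‖y - q‖ := by
        rw [norm_smul, norm_smul, Real.norm_eq_abs, Real.norm_eq_abs,
          abs_of_nonneg ha, abs_of_nonneg hb]
  have h3 := h1.trans h2
  simp only [smul_eq_mul]
  nlinarith [mul_le_mul_of_nonneg_left hxp.le ha, mul_le_mul_of_nonneg_left hyq.le hb]

lemma heatKernel_nonneg (d : ℕ) {t : ℝ} (ht : 0 < t) (z : EuclideanSpace ℝ (Fin d)) :
    0 ≤ heatKernel d t z := by
  unfold heatKernel
  have : (0:ℝ) < 4 * Real.pi * t := by positivity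
  positivity

lemma heatKernel_le (d : ℕ) {t b : ℝ} (ht : 0 < t) (hb : 0 ≤ b)
    {z : EuclideanSpace ℝ (Fin d)} (hz : b ≤ ‖z‖) :
    heatKernel d t z ≤ (4 * Real.pi * t) ^ (-(d : ℝ) / 2) * Real.exp (-b ^ 2 / (4 * t)) := by
  unfold heatKernel
  have h4t : (0:ℝ) < 4 * Real.pi * t := by positivity
  have hpow : (0:ℝ) < (4 * Real.pi * t) ^ (-(d : ℝ) / 2) := Real.rpow_pos_of_pos h4t _
  refine mul_le_mul_of_nonneg_left (Real.exp_le_exp.2 ?_) hpow.le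
  have : b ^ 2 ≤ ‖z‖ ^ 2 := by nlinarith [norm_nonneg z]
  have h4t' : (0:ℝ) < 4 * t := by positivity
  rw [div_le_div_iff_of_pos_right h4t']
  linarith

lemma heatKernel_ge (d : ℕ) {t b : ℝ} (ht : 0 < t)
    {z : EuclideanSpace ℝ (Fin d)} (hz : ‖z‖ ≤ b) :
    (4 * Real.pi * t) ^ (-(d : ℝ) / 2) * Real.exp (-b ^ 2 / (4 * t)) ≤ heatKernel d t z := by
  unfold heatKernel
  have h4t : (0:ℝ) < 4 * Real.pi * t := by positivity
  have hpow : (0:ℝ) < (4 * Real.pi * t) ^ (-(d : ℝ) / 2) := Real.rpow_pos_of_pos h4t _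
  refine mul_le_mul_of_nonneg_left (Real.exp_le_exp.2 ?_) hpow.le
  have : ‖z‖ ^ 2 ≤ b ^ 2 := by nlinarith [norm_nonneg z]
  have h4t' : (0:ℝ) < 4 * t := by positivity
  rw [div_le_div_iff_of_pos_right h4t']
  linarith

lemma heatKernel_le_max (d : ℕ) {t : ℝ} (ht : 0 < t) (z : EuclideanSpace ℝ (Fin d)) :
    heatKernel d t z ≤ (4 * Real.pi * t) ^ (-(d : ℝ) / 2) := by
  have := heatKernel_le d ht le_rfl (norm_nonneg z)
  simpa using this

lemma heatKernel_cont (d : ℕ) {t : ℝ} (x : EuclideanSpace ℝ (Fin d)) :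
    Continuous (fun y : EuclideanSpace ℝ (Fin d) => heatKernel d t (x - y)) := by
  unfold heatKernel
  exact continuous_const.mul (Real.continuous_exp.comp
    (((((continuous_const.sub continuous_id).norm).pow 2).neg).div_const _))

/-- Near-minimizers of the distance to `xstar` within compact `A` are close to the
convex hull of the true minimizers. -/

lemma shrink_lemma {d : ℕ} {A : Set (EuclideanSpace ℝ (Fin d))} (hAcpt : IsCompact A)
    (hAne : A.Nonempty) (xstar : EuclideanSpace ℝ (Fin d)) {ε : ℝ} (hε : 0 < ε) :
    ∃ s : ℝ, 0 < s ∧ ∀ y ∈ A, dist xstar y ≤ infDist xstar A + s →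
      infDist y (convexHull ℝ (nearestPts A xstar)) ≤ ε := by
  set D := infDist xstar A with hD
  set C := convexHull ℝ (nearestPts A xstar) with hC
  set V : Set (EuclideanSpace ℝ (Fin d)) := {y | infDist y C < ε} with hV
  have hVopen : IsOpen V := isOpen_lt (continuous_infDist_pt C) continuous_const
  have hPV : nearestPts A xstar ⊆ V := by
    intro a ha
    have : a ∈ C := subset_convexHull ℝ _ ha
    simpa [hV, infDist_zero_of_mem this] using hε
  have hK : IsCompact (A \ V) := hAcpt.diff hVopen
  rcases Set.eq_empty_or_nonempty (A \ V) with hKe | hKne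
  · refine ⟨1, one_pos, fun y hy _ => ?_⟩
    have : y ∈ V := by
      by_contra hyV
      exact (Set.eq_empty_iff_forall_notMem.1 hKe y) ⟨hy, hyV⟩
    exact le_of_lt this
  · obtain ⟨y₀, hy₀K, hy₀min⟩ := hK.exists_isMinOn (f := fun y => dist xstar y) hKne
      (continuous_const.dist continuous_id).continuousOn
    have hDy₀ : D < dist xstar y₀ := by
      rcases lt_or_eq_of_le (infDist_le_dist_of_mem hy₀K.1) with h | h
      · exact h
      · exfalso
        exact hy₀K.2 (hPV ⟨hy₀K.1, by rw [← dist_eq_norm]; exact h.symm⟩)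
    refine ⟨(dist xstar y₀ - D) / 2, by linarith, fun y hy hyd => ?_⟩
    have : y ∈ V := by
      by_contra hyV
      have := hy₀min ⟨hy, hyV⟩
      simp only [Set.mem_setOf_eq] at this
      linarith
    exact le_of_lt this

theorem barycenter_concentration
    (d : ℕ) (hd : 1 ≤ d)
    (μ : Measure (EuclideanSpace ℝ (Fin d))) [IsProbabilityMeasure μ]
    (A : Set (EuclideanSpace ℝ (Fin d))) (hA : A = msupport μ) (hAcpt : IsCompact A)
    (c α r₀ : ℝ) (hc : 0 < c) (hα : 0 ≤ α) (hr₀ : 0 < r₀)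
    (hSB : SmallBall μ c α r₀)
    (xstar : EuclideanSpace ℝ (Fin d)) :
    ∀ ε : ℝ, 0 < ε → ∃ δ : ℝ, 0 < δ ∧
      ∀ (x : EuclideanSpace ℝ (Fin d)) (t : ℝ), 0 < t → ‖x - xstar‖ + t ≤ δ →
        Metric.infDist (tiltedBarycenter μ x t)
          (convexHull ℝ (nearestPts A xstar)) ≤ ε := by
  intro ε hε
  -- basic facts about `A`
  have hAnull : μ Aᶜ = 0 := by rw [hA]; exact msupport_compl_null μ
  have h_ae : ∀ᵐ y ∂μ, y ∈ A := by
    rw [ae_iff]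
    exact hAnull
  have hAne : A.Nonempty := by
    by_contra h
    rw [Set.not_nonempty_iff_eq_empty] at h
    rw [h, Set.compl_empty] at hAnull
    simp at hAnull
  obtain ⟨R', hR'⟩ := (isBounded_iff_subset_closedBall 0).1 hAcpt.isBounded
  set R := max R' 0 with hRdef
  have hR0 : 0 ≤ R := le_max_right _ _
  have hRA : ∀ y ∈ A, ‖y‖ ≤ R := by
    intro y hy
    have := hR' hy
    rw [mem_closedBall, dist_zero_right] at this
    exact this.trans (le_max_left _ _)
  set D := infDist xstar A with hDdef
  have hD0 : 0 ≤ D := infDist_nonneg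
  set C := convexHull ℝ (nearestPts A xstar) with hCdef
  obtain ⟨a₀, ha₀A, ha₀d⟩ := hAcpt.exists_infDist_eq_dist hAne xstar
  have ha₀P : a₀ ∈ nearestPts A xstar := ⟨ha₀A, by rw [← dist_eq_norm]; exact ha₀d.symm⟩
  have ha₀C : a₀ ∈ C := subset_convexHull ℝ _ ha₀P
  have hCne : C.Nonempty := ⟨a₀, ha₀C⟩
  set g : EuclideanSpace ℝ (Fin d) → ℝ := fun y => infDist y C with hgdef
  have hgconv : ConvexOn ℝ Set.univ g := convexOn_infDist' hCne (convex_convexHull ℝ _)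
  have hgcont : Continuous g := continuous_infDist_pt C
  have hgnonneg : ∀ y, 0 ≤ g y := fun y => infDist_nonneg
  set M := 2 * R + 1 with hMdef
  have hM0 : 0 < M := by positivity
  have hgM : ∀ y ∈ A, g y ≤ M := by
    intro y hy
    calc g y ≤ dist y a₀ := infDist_le_dist_of_mem ha₀C
    _ = ‖y - a₀‖ := dist_eq_norm _ _
    _ ≤ ‖y‖ + ‖a₀‖ := norm_sub_le _ _
    _ ≤ R + R := add_le_add (hRA y hy) (hRA a₀ ha₀A)
    _ ≤ M := by rw [hMdef]; linarith
  obtain ⟨s, hs, hshrink⟩ := shrink_lemma hAcpt hAne xstar (half_pos hε)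
  set r := min r₀ (s / 4) with hrdef
  have hr0 : 0 < r := lt_min hr₀ (by linarith)
  have hrr₀ : r ≤ r₀ := min_le_left _ _
  have hrs : r ≤ s / 4 := min_le_right _ _
  set γ := (D + 3 * s / 4) ^ 2 - (D + s / 2) ^ 2 with hγdef
  have hγ : 0 < γ := by rw [hγdef]; nlinarith
  have hcr : 0 < c * r ^ α := by positivity
  -- choose t₀
  have htends : Tendsto (fun t : ℝ => M / (c * r ^ α) * Real.exp (-γ / (4 * t)))
      (nhdsWithin 0 (Set.Ioi 0)) (nhds 0) := by
    have h1 : Tendsto (fun t : ℝ => -γ / (4 * t)) (nhdsWithin 0 (Set.Ioi 0)) atBot := by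
      have heq : (fun t : ℝ => -γ / (4 * t)) = fun t : ℝ => (-γ / 4) * t⁻¹ := by
        funext t; rw [div_mul_eq_div_div, div_eq_mul_inv]
      rw [heq]
      refine Tendsto.const_mul_atTop_of_neg ?_ tendsto_inv_nhdsGT_zero
      rw [neg_div]
      exact neg_neg_of_pos (div_pos hγ (by norm_num))
    have h2 : Tendsto (fun t : ℝ => Real.exp (-γ / (4 * t))) (nhdsWithin 0 (Set.Ioi 0)) (nhds 0) :=
      Real.tendsto_exp_atBot.comp h1
    have h3 := h2.const_mul (M / (c * r ^ α))
    simpa using h3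
  have hhalf : ∀ᶠ t in nhdsWithin 0 (Set.Ioi 0),
      M / (c * r ^ α) * Real.exp (-γ / (4 * t)) ≤ ε / 2 :=
    htends.eventually (eventually_le_nhds (half_pos hε))
  obtain ⟨t₀, ht₀b, ht₀mem⟩ := (hhalf.and self_mem_nhdsWithin).exists
  have ht₀pos : 0 < t₀ := ht₀mem
  refine ⟨min (s / 4) t₀, lt_min (by linarith) ht₀pos, fun x t ht hxt => ?_⟩
  set η := ‖x - xstar‖ with hηdef
  have hη0 : 0 ≤ η := norm_nonneg _
  have hηs : η ≤ s / 4 := by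
    have := min_le_left (s / 4) t₀
    linarith
  have htt₀ : t ≤ t₀ := by
    have := min_le_right (s / 4) t₀
    linarith
  set Kt := (4 * Real.pi * t) ^ (-(d : ℝ) / 2) with hKtdef
  have hKt0 : 0 < Kt := Real.rpow_pos_of_pos (by positivity) _
  have hDx : infDist x A ≤ D + η := by
    calc infDist x A ≤ infDist xstar A + dist x xstar := infDist_le_infDist_add_dist
    _ = D + η := by rw [← hDdef, dist_eq_norm]
  -- integrability
  have hGcont : Continuous fun y : EuclideanSpace ℝ (Fin d) => heatKernel d t (x - y) :=
    heatKernel_cont d x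
  have I1 : Integrable (fun y => heatKernel d t (x - y)) μ := by
    refine ⟨hGcont.aestronglyMeasurable, HasFiniteIntegral.of_bounded (C := Kt)
      (ae_of_all _ fun y => ?_)⟩
    rw [Real.norm_eq_abs, abs_of_nonneg (heatKernel_nonneg d ht _)]
    exact heatKernel_le_max d ht _
  have I2 : Integrable (fun y => heatKernel d t (x - y) • y) μ := by
    refine ⟨(hGcont.smul continuous_id).aestronglyMeasurable,
      HasFiniteIntegral.of_bounded (C := Kt * R) ?_⟩
    filter_upwards [h_ae] with y hy
    rw [norm_smul, Real.norm_eq_abs, abs_of_nonneg (heatKernel_nonneg d ht _)]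
    exact mul_le_mul (heatKernel_le_max d ht _) (hRA y hy) (norm_nonneg y) hKt0.le
  have I3 : Integrable (fun y => heatKernel d t (x - y) * g y) μ := by
    refine ⟨(hGcont.mul hgcont).aestronglyMeasurable,
      HasFiniteIntegral.of_bounded (C := Kt * M) ?_⟩
    filter_upwards [h_ae] with y hy
    rw [Real.norm_eq_abs, abs_of_nonneg (mul_nonneg (heatKernel_nonneg d ht _) (hgnonneg y))]
    exact mul_le_mul (heatKernel_le_max d ht _) (hgM y hy) (hgnonneg y) hKt0.le
  -- lower bound for u
  set u := heatEvolution μ x t with hudef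
  have hu_int : ∫ y, heatKernel d t (x - y) ∂μ = u := rfl
  obtain ⟨a, haA, had⟩ := hAcpt.exists_infDist_eq_dist hAne x
  have hball : ENNReal.ofReal (c * r ^ α) ≤ μ (closedBall a r) := by
    refine hSB a ?_ r hr0 hrr₀
    rw [← hA]; exact haA
  have hμball : c * r ^ α ≤ (μ (closedBall a r)).toReal :=
    (ENNReal.ofReal_le_iff_le_toReal (measure_ne_top μ _)).1 hball
  set e1 := Real.exp (-(D + s / 2) ^ 2 / (4 * t)) with he1def
  have he1 : 0 < e1 := Real.exp_pos _
  have hulow : Kt * e1 * (c * r ^ α) ≤ u := by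
    have hconst : ∀ y ∈ closedBall a r, Kt * e1 ≤ heatKernel d t (x - y) := by
      intro y hy
      have h1 : ‖x - y‖ ≤ D + s / 2 := by
        have hya : dist a y ≤ r := by rw [dist_comm]; exact mem_closedBall.1 hy
        have hxa : dist x a = infDist x A := had.symm
        rw [← dist_eq_norm]
        calc dist x y ≤ dist x a + dist a y := dist_triangle _ _ _
        _ ≤ (D + η) + r := by rw [hxa]; exact add_le_add hDx hya
        _ ≤ D + s / 2 := by linarith
      exact heatKernel_ge d ht h1
    calc Kt * e1 * (c * r ^ α) ≤ Kt * e1 * (μ (closedBall a r)).toReal :=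
        mul_le_mul_of_nonneg_left hμball (mul_nonneg hKt0.le he1.le)
    _ ≤ ∫ y in closedBall a r, heatKernel d t (x - y) ∂μ :=
        by have := setIntegral_ge_of_const_le_real measurableSet_closedBall (measure_ne_top μ _) hconst
             I1.integrableOn
           exact this
    _ ≤ ∫ y, heatKernel d t (x - y) ∂μ :=
        setIntegral_le_integral I1 (ae_of_all _ fun y => heatKernel_nonneg d ht _)
    _ = u := hu_int
  have hu0 : 0 < u := lt_of_lt_of_le (by positivity) hulow
  -- the tilted probability measure
  set w : EuclideanSpace ℝ (Fin d) → NNReal :=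
    fun y => Real.toNNReal (u⁻¹ * heatKernel d t (x - y)) with hwdef
  have hw_meas : Measurable w :=
    measurable_real_toNNReal.comp (measurable_const.mul hGcont.measurable)
  have hw_coe : ∀ y, (w y : ℝ) = u⁻¹ * heatKernel d t (x - y) := fun y =>
    Real.coe_toNNReal _ (mul_nonneg (inv_nonneg.2 hu0.le) (heatKernel_nonneg d ht _))
  set ν := μ.withDensity (fun y => (w y : ENNReal)) with hνdef
  have hwsmul : (fun y => w y • y) = fun y => u⁻¹ • (heatKernel d t (x - y) • y) := by
    funext y
    rw [NNReal.smul_def, hw_coe y, mul_smul]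
  have hwg : (fun y => w y • g y) = fun y => u⁻¹ * (heatKernel d t (x - y) * g y) := by
    funext y
    rw [NNReal.smul_def, smul_eq_mul, hw_coe y, mul_assoc]
  have hint_w : Integrable (fun y => (w y : ℝ)) μ := by
    have heq : (fun y => (w y : ℝ)) = fun y => u⁻¹ * heatKernel d t (x - y) := funext hw_coe
    rw [heq]; exact I1.const_mul _
  have hν_univ : ν Set.univ = 1 := by
    rw [hνdef, withDensity_apply _ MeasurableSet.univ, Measure.restrict_univ,
      lintegral_coe_eq_integral w hint_w]
    have heq : ∫ y, (w y : ℝ) ∂μ = 1 := by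
      rw [funext hw_coe, integral_const_mul, hu_int, inv_mul_cancel₀ hu0.ne']
    rw [heq, ENNReal.ofReal_one]
  haveI hνprob : IsProbabilityMeasure ν := ⟨hν_univ⟩
  have hmean : ∫ y, y ∂ν = tiltedBarycenter μ x t := by
    rw [hνdef, integral_withDensity_eq_integral_smul hw_meas, hwsmul, integral_smul]
    rfl
  have hf_int : Integrable (fun y => y) ν := by
    rw [hνdef, integrable_withDensity_iff_integrable_smul hw_meas, hwsmul]
    exact I2.smul u⁻¹
  have hgf_int : Integrable g ν := by
    rw [hνdef, integrable_withDensity_iff_integrable_smul hw_meas, hwg]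
    exact I3.const_mul _
  have hJensen : g (∫ y, y ∂ν) ≤ ∫ y, g y ∂ν :=
    hgconv.map_integral_le hgcont.continuousOn isClosed_univ
      (ae_of_all _ fun y => Set.mem_univ y) hf_int hgf_int
  have hRHS : ∫ y, g y ∂ν = u⁻¹ * ∫ y, heatKernel d t (x - y) * g y ∂μ := by
    rw [hνdef, integral_withDensity_eq_integral_smul hw_meas, hwg, integral_const_mul]
  -- splitting the integral
  set F := {y : EuclideanSpace ℝ (Fin d) | D + s ≤ dist xstar y} with hFdef
  have hFm : MeasurableSet F :=
    measurableSet_le measurable_const (continuous_const.dist continuous_id).measurable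
  have hsplit : ∫ y, heatKernel d t (x - y) * g y ∂μ
      = (∫ y in F, heatKernel d t (x - y) * g y ∂μ)
        + ∫ y in Fᶜ, heatKernel d t (x - y) * g y ∂μ :=
    (integral_add_compl hFm I3).symm
  have hNear : ∫ y in Fᶜ, heatKernel d t (x - y) * g y ∂μ ≤ ε / 2 * u := by
    calc ∫ y in Fᶜ, heatKernel d t (x - y) * g y ∂μ
        ≤ ∫ y in Fᶜ, ε / 2 * heatKernel d t (x - y) ∂μ := by
          refine setIntegral_mono_ae_restrict I3.integrableOn
            ((I1.const_mul (ε / 2)).integrableOn) ?_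
          filter_upwards [ae_restrict_of_ae h_ae, ae_restrict_mem hFm.compl] with y hyA hyF
          have hyd : dist xstar y ≤ D + s := by
            have h' : ¬ (D + s ≤ dist xstar y) := hyF
            linarith [not_le.1 h']
          have hgy := hshrink y hyA hyd
          calc heatKernel d t (x - y) * g y ≤ heatKernel d t (x - y) * (ε / 2) :=
              mul_le_mul_of_nonneg_left hgy (heatKernel_nonneg d ht _)
          _ = ε / 2 * heatKernel d t (x - y) := mul_comm _ _
      _ = ε / 2 * ∫ y in Fᶜ, heatKernel d t (x - y) ∂μ := integral_const_mul _ _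
      _ ≤ ε / 2 * u := by
          refine mul_le_mul_of_nonneg_left ?_ (by linarith)
          rw [← hu_int]
          exact setIntegral_le_integral I1 (ae_of_all _ fun y => heatKernel_nonneg d ht _)
  set e2 := Real.exp (-(D + 3 * s / 4) ^ 2 / (4 * t)) with he2def
  have he2 : 0 < e2 := Real.exp_pos _
  have hFar : ∫ y in F, heatKernel d t (x - y) * g y ∂μ ≤ Kt * e2 * M := by
    have hbound : ∀ᵐ y ∂(μ.restrict F), heatKernel d t (x - y) * g y ≤ Kt * e2 * M := by
      filter_upwards [ae_restrict_of_ae h_ae, ae_restrict_mem hFm] with y hyA hyF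
      have h1 : D + s ≤ dist xstar y := hyF
      have hxy : D + 3 * s / 4 ≤ ‖x - y‖ := by
        have h2 : dist xstar y ≤ dist xstar x + dist x y := dist_triangle _ _ _
        have h3 : dist xstar x = η := by rw [dist_comm, dist_eq_norm]
        rw [← dist_eq_norm]
        linarith
      have hG := heatKernel_le d ht (by linarith) hxy
      exact mul_le_mul hG (hgM y hyA) (hgnonneg y) (mul_nonneg hKt0.le he2.le)
    calc ∫ y in F, heatKernel d t (x - y) * g y ∂μ
        ≤ ∫ _ in F, Kt * e2 * M ∂μ :=
          setIntegral_mono_ae_restrict I3.integrableOn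
            (integrableOn_const (measure_ne_top μ F)) hbound
      _ = (μ F).toReal * (Kt * e2 * M) := by rw [setIntegral_const, smul_eq_mul]; rfl
      _ ≤ 1 * (Kt * e2 * M) := by
          refine mul_le_mul_of_nonneg_right ?_ (by positivity)
          have h1 := ENNReal.toReal_mono (measure_ne_top μ Set.univ)
            (measure_mono (Set.subset_univ F))
          simpa using h1
      _ = Kt * e2 * M := one_mul _
  -- the far term is small
  have hfar2 : u⁻¹ * (Kt * e2 * M) ≤ ε / 2 := by
    have hL0 : 0 < Kt * e1 * (c * r ^ α) := by positivity
    have huinv : u⁻¹ ≤ (Kt * e1 * (c * r ^ α))⁻¹ := inv_anti₀ hL0 hulow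
    calc u⁻¹ * (Kt * e2 * M) ≤ (Kt * e1 * (c * r ^ α))⁻¹ * (Kt * e2 * M) :=
        mul_le_mul_of_nonneg_right huinv (by positivity)
    _ = M / (c * r ^ α) * (e2 / e1) := by
        field_simp
    _ = M / (c * r ^ α) * Real.exp (-γ / (4 * t)) := by
        rw [he2def, he1def, ← Real.exp_sub]
        congr 1
        rw [hγdef]
        field_simp
        ring
    _ ≤ M / (c * r ^ α) * Real.exp (-γ / (4 * t₀)) := by
        refine mul_le_mul_of_nonneg_left (Real.exp_le_exp.2 ?_) (div_nonneg hM0.le hcr.le)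
        rw [neg_div, neg_div, neg_le_neg_iff]
        exact div_le_div_of_nonneg_left hγ.le (by linarith) (by linarith)
    _ ≤ ε / 2 := ht₀b
  -- conclusion
  have hmain : g (tiltedBarycenter μ x t) ≤ ε := by
    calc g (tiltedBarycenter μ x t)
        ≤ u⁻¹ * ∫ y, heatKernel d t (x - y) * g y ∂μ := by
          rw [← hRHS, ← hmean]; exact hJensen
      _ = u⁻¹ * ((∫ y in F, heatKernel d t (x - y) * g y ∂μ)
            + ∫ y in Fᶜ, heatKernel d t (x - y) * g y ∂μ) := by rw [← hsplit]
      _ ≤ u⁻¹ * (Kt * e2 * M + ε / 2 * u) :=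
          mul_le_mul_of_nonneg_left (add_le_add hFar hNear) (inv_nonneg.2 hu0.le)
      _ = u⁻¹ * (Kt * e2 * M) + ε / 2 * (u⁻¹ * u) := by ring
      _ = u⁻¹ * (Kt * e2 * M) + ε / 2 := by rw [inv_mul_cancel₀ hu0.ne', mul_one]
      _ ≤ ε / 2 + ε / 2 := add_le_add hfar2 le_rfl
      _ = ε := by ring
  exact hmain
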